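/- Let Γ and Γ' be connected graphs, let B be a graph with exactly one vertex, and let π : Γ → B and π' : Γ' → B be immersions (edge-labelings). Let v be a vertex of Γ and v' a vertex of Γ'. Then there exists an isomorphism of graphs f : Γ → Γ' with π' ∘ f = π and f(v) = v' if and only if there exists a bijection p ↔ p' between the set of paths in Γ starting at v and the set of paths in Γ' starting at v' such that π(p) = π'(p') for all corresponding pairs and such that p is a circuit at v if and only if p' is a circuit at v'. -/

import Mathlib

open Quiver

/-- A graph morphism between graphs in the sense of Serre (quivers with involutive
reverse) preserves the reverse operation. -/
def PreservesReverse {U V : Type*} [Quiver U] [Quiver V]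
    [HasInvolutiveReverse U] [HasInvolutiveReverse V] (f : U ⥤q V) : Prop :=
  ∀ ⦃a b : U⦄ (e : a ⟶ b), f.map (reverse e) = reverse (f.map e)

/-- A morphism of graphs is an immersion if it is injective on each star. -/
def IsImmersion {U V : Type*} [Quiver U] [Quiver V] (f : U ⥤q V) : Prop :=
  ∀ u : U, Function.Injective (f.star u)

/-- A graph is connected if any two vertices are joined by a path. -/
def IsConnectedQuiver (U : Type*) [Quiver U] : Prop :=
  ∀ u v : U, Nonempty (Path u v)

/-- The action of a prefunctor on the total set of arrows. -/
def arrowMap {U V : Type*} [Quiver U] [Quiver V] (f : U ⥤q V) :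
    (Σ u w : U, u ⟶ w) → (Σ u w : V, u ⟶ w) :=
  fun a => ⟨f.obj a.1, f.obj a.2.1, f.map a.2.2⟩

section Aux

variable {B : Type*} [Quiver B]

lemma aux_sigma_ext {α : Type*} {β : α → Type*} {a a' : α} {x : β a} {y : β a'}
    (h : a = a') (h2 : HEq x y) : (⟨a, x⟩ : Σ i, β i) = ⟨a', y⟩ := by
  subst h; rw [eq_of_heq h2]

lemma aux_sigma3_ext {α : Type*} [Quiver α] {a a' c c' : α} {e : a ⟶ c} {e' : a' ⟶ c'}
    (h1 : a = a') (h2 : c = c') (h3 : HEq e e') :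
    (⟨a, c, e⟩ : Σ u w : α, u ⟶ w) = ⟨a', c', e'⟩ := by
  subst h1; subst h2; rw [eq_of_heq h3]

lemma aux_sigma3_inv {α : Type*} [Quiver α] {a a' c c' : α} {e : a ⟶ c} {e' : a' ⟶ c'}
    (h : (⟨a, c, e⟩ : Σ u w : α, u ⟶ w) = ⟨a', c', e'⟩) :
    a = a' ∧ c = c' ∧ HEq e e' := by
  have h1 : a = a' := congrArg Sigma.fst h
  subst h1
  have h2 : (⟨c, e⟩ : Σ w, a ⟶ w) = ⟨c', e'⟩ := by
    simpa using h
  have h3 : c = c' := congrArg Sigma.fst h2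
  subst h3
  refine ⟨rfl, rfl, heq_of_eq ?_⟩
  simpa using h2

lemma aux_sigma_inv {α : Type*} {β : α → Type*} {x y : Σ i : α, β i} (h : x = y) :
    x.1 = y.1 ∧ HEq x.2 y.2 := by subst h; exact ⟨rfl, HEq.rfl⟩

lemma aux_nil_heq {a a' : B} (h : a = a') :
    HEq (Path.nil : Path a a) (Path.nil : Path a' a') := by subst h; rfl

lemma aux_nil_heq_cons {a x y c : B} (h1 : a = x) (h2 : a = c)
    {P : Path x y} {E : y ⟶ c} (h : HEq (Path.nil : Path a a) (P.cons E)) : False := by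
  subst h1; subst h2
  have h' := eq_of_heq h
  injection h'

lemma aux_cons_heq {a a' b b' c c' : B} (ha : a = a') (hbb : b = b') (hc : c = c')
    {P : Path a b} {Q : Path a' b'} {E : b ⟶ c} {E' : b' ⟶ c'}
    (h1 : HEq P Q) (h2 : HEq E E') : HEq (P.cons E) (Q.cons E') := by
  subst ha; subst hbb; subst hc; rw [eq_of_heq h1, eq_of_heq h2]

lemma aux_cons_heq_inv {a a' b b' c c' : B} (ha : a = a') (hc : c = c')
    {P : Path a b} {Q : Path a' b'} {E : b ⟶ c} {E' : b' ⟶ c'}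
    (h : HEq (P.cons E) (Q.cons E')) : b = b' ∧ HEq P Q ∧ HEq E E' := by
  subst ha; subst hc
  have h' := eq_of_heq h
  injection h' with h1 h2 h3 h4
  exact ⟨h1, h3, h4⟩

lemma aux_rev_heq [HasReverse B] {a a' c c' : B} (ha : a = a') (hc : c = c')
    {P : Path a c} {Q : Path a' c'} (h : HEq P Q) : HEq P.reverse Q.reverse := by
  subst ha; subst hc; rw [eq_of_heq h]

lemma aux_hom_rev_heq [HasReverse B] {a a' c c' : B} (ha : a = a') (hc : c = c')
    {e : a ⟶ c} {e' : a' ⟶ c'} (h : HEq e e') : HEq (reverse e) (reverse e') := by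
  subst ha; subst hc; rw [eq_of_heq h]

variable {Γ : Type*} [Quiver Γ]

lemma aux_mapPath_heq_congr (π : Γ ⥤q B) {u u' w w' : Γ} (hu : u = u') (hw : w = w')
    {p : Path u w} {q : Path u' w'} (h : HEq p q) :
    HEq (π.mapPath p) (π.mapPath q) := by
  subst hu; subst hw; rw [eq_of_heq h]

lemma aux_mapPath_reverse [HasReverse Γ] [HasReverse B] (π : Γ ⥤q B)
    (hrev : ∀ ⦃a b : Γ⦄ (e : a ⟶ b), π.map (reverse e) = reverse (π.map e))
    {a c : Γ} (p : Path a c) :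
    π.mapPath p.reverse = (π.mapPath p).reverse := by
  induction p with
  | nil => simp
  | cons p e ih => simp [ih, hrev e]

lemma aux_mapPath_fcomp {Γ Γ' : Type*} [Quiver Γ] [Quiver Γ'] (F : Γ ⥤q Γ') (G : Γ' ⥤q B)
    {a c : Γ} (p : Path a c) : (F ⋙q G).mapPath p = G.mapPath (F.mapPath p) := by
  induction p with
  | nil => rfl
  | cons p e ih =>
    simp [ih]
    rfl

lemma aux_label_inj (hb : ∀ x y : B, x = y) (π : Γ ⥤q B) (hπ : IsImmersion π)
    {u w w' : Γ} {p : Path u w} {q : Path u w'}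
    (h : HEq (π.mapPath p) (π.mapPath q)) : (⟨w, p⟩ : Σ x : Γ, Path u x) = ⟨w', q⟩ := by
  refine π.pathStar_injective hπ u (a₁ := ⟨w, p⟩) (a₂ := ⟨w', q⟩) ?_
  show (⟨π.obj w, π.mapPath p⟩ : Quiver.PathStar (π.obj u)) = ⟨π.obj w', π.mapPath q⟩
  exact aux_sigma_ext (hb _ _) h

lemma aux_arrow_inj (hb : ∀ x y : B, x = y) (π : Γ ⥤q B) (hπ : IsImmersion π)
    {u w w' : Γ} {e : u ⟶ w} {e' : u ⟶ w'} (h : HEq (π.map e) (π.map e')) :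
    w = w' ∧ HEq e e' := by
  have h2 : π.star u ⟨w, e⟩ = π.star u ⟨w', e'⟩ := by
    show (⟨π.obj w, π.map e⟩ : Quiver.Star (π.obj u)) = ⟨π.obj w', π.map e'⟩
    exact aux_sigma_ext (hb _ _) h
  have h3 := hπ u h2
  have h4 : w = w' := congrArg Sigma.fst h3
  subst h4
  exact ⟨rfl, heq_of_eq (by simpa using h3)⟩

lemma aux_arrow_inj' (hb : ∀ x y : B, x = y) (π : Γ ⥤q B) (hπ : IsImmersion π)
    {u u' w w' : Γ} (hu : u = u') {e : u ⟶ w} {e' : u' ⟶ w'}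
    (h : HEq (π.map e) (π.map e')) : w = w' ∧ HEq e e' := by
  subst hu; exact aux_arrow_inj hb π hπ h

lemma aux_decomp {Γ' : Type*} [Quiver Γ'] (hb : ∀ x y : B, x = y) (π' : Γ' ⥤q B) {a : Γ'}
    {x y z : B} (L₁ : Path x y) (L₂ : Path y z) :
    ∀ {c : Γ'} (r : Path a c), HEq (π'.mapPath r) (L₁.comp L₂) →
      ∃ (m : Γ') (r₁ : Path a m) (r₂ : Path m c), r = r₁.comp r₂ ∧
        HEq (π'.mapPath r₁) L₁ ∧ HEq (π'.mapPath r₂) L₂ := by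
  induction L₂ with
  | nil =>
    intro c r h
    exact ⟨c, r, Path.nil, (Path.comp_nil r).symm, by simpa using h, aux_nil_heq (hb _ _)⟩
  | cons L₂ ℓ ih =>
    intro c r h
    cases r with
    | nil =>
      rw [Path.comp_cons] at h
      exact absurd h (fun h => aux_nil_heq_cons (hb _ _) (hb _ _) h)
    | cons r₀ ε =>
      rw [Path.comp_cons, Prefunctor.mapPath_cons] at h
      obtain ⟨-, h1, h2⟩ := aux_cons_heq_inv (hb _ _) (hb _ _) h
      obtain ⟨m, r₁, r₂, hr, hh1, hh2⟩ := ih r₀ h1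
      refine ⟨m, r₁, r₂.cons ε, by rw [hr, Path.comp_cons], hh1, ?_⟩
      rw [Prefunctor.mapPath_cons]
      exact aux_cons_heq (hb _ _) (hb _ _) (hb _ _) hh2 h2

lemma aux_prefunctor_ext {V W : Type*} [Quiver V] [Quiver W] {F G : V ⥤q W}
    (ho : ∀ X, F.obj X = G.obj X)
    (hm : ∀ (X Y : V) (e : X ⟶ Y), HEq (F.map e) (G.map e)) : F = G := by
  obtain ⟨Fo, Fm⟩ := F; obtain ⟨Go, Gm⟩ := G
  obtain rfl : Fo = Go := funext ho
  congr 1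
  funext X Y e
  exact eq_of_heq (hm X Y e)

end Aux

section Key

variable {Γ Γ' B : Type*} [Quiver Γ] [Quiver Γ'] [Quiver B]
    [HasInvolutiveReverse Γ] [HasInvolutiveReverse Γ'] [HasInvolutiveReverse B]

lemma aux_endpoint (hb : ∀ x y : B, x = y)
    (π : Γ ⥤q B) (hπrev : PreservesReverse π)
    (π' : Γ' ⥤q B) (hπ'rev : PreservesReverse π') (hπ' : IsImmersion π')
    (v : Γ) (v' : Γ')
    (Φ : (Σ w : Γ, Path v w) → (Σ w' : Γ', Path v' w'))
    (hlab : ∀ x, HEq (π'.mapPath (Φ x).2) (π.mapPath x.2))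
    (hcirc : ∀ x : Σ w : Γ, Path v w, x.1 = v → (Φ x).1 = v')
    {w : Γ} (p q : Path v w) : (Φ ⟨w, p⟩).1 = (Φ ⟨w, q⟩).1 := by
  have hx1 : (Φ ⟨v, p.comp q.reverse⟩).1 = v' := hcirc _ rfl
  have hxl := hlab ⟨v, p.comp q.reverse⟩
  rcases hy : Φ ⟨v, p.comp q.reverse⟩ with ⟨w0, c'⟩
  rw [hy] at hx1 hxl
  dsimp only at hx1 hxl
  subst hx1
  simp only [Prefunctor.mapPath_comp, aux_mapPath_reverse π hπrev] at hxl
  obtain ⟨m, r₁, r₂, hc, h1, h2⟩ :=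
    aux_decomp hb π' (π.mapPath p) ((π.mapPath q).reverse) c' hxl
  have hp := hlab ⟨w, p⟩
  rcases hyp : Φ ⟨w, p⟩ with ⟨w₁, p'⟩
  rw [hyp] at hp
  have hq := hlab ⟨w, q⟩
  rcases hyq : Φ ⟨w, q⟩ with ⟨w₂, q'⟩
  rw [hyq] at hq
  have e1 := aux_label_inj hb π' hπ' (h1.trans hp.symm)
  have h2' : HEq (π'.mapPath r₂.reverse) (π.mapPath q) := by
    rw [aux_mapPath_reverse π' hπ'rev]
    have h3 := aux_rev_heq (hb _ _) (hb _ _) h2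
    rwa [Path.reverse_reverse] at h3
  have e2 := aux_label_inj hb π' hπ' (h2'.trans hq.symm)
  have f1 : m = w₁ := congrArg Sigma.fst e1
  have f2 : m = w₂ := congrArg Sigma.fst e2
  exact f1.symm.trans f2

lemma aux_arrowlift (hb : ∀ x y : B, x = y)
    (π : Γ ⥤q B) (π' : Γ' ⥤q B) (hπ' : IsImmersion π')
    (v : Γ) (v' : Γ')
    (Φ : (Σ w : Γ, Path v w) → (Σ w' : Γ', Path v' w'))
    (hlab : ∀ x, HEq (π'.mapPath (Φ x).2) (π.mapPath x.2))
    {a c : Γ} (e : a ⟶ c) (pa : Path v a) :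
    ∃ ε : (Φ ⟨a, pa⟩).1 ⟶ (Φ ⟨c, pa.cons e⟩).1, HEq (π'.map ε) (π.map e) := by
  have hp := hlab ⟨a, pa⟩
  have hs := hlab ⟨c, pa.cons e⟩
  rcases hyp : Φ ⟨a, pa⟩ with ⟨a₁, p'⟩
  rcases hyc : Φ ⟨c, pa.cons e⟩ with ⟨c₁, s⟩
  rw [hyp] at hp
  rw [hyc] at hs
  simp only [Prefunctor.mapPath_cons] at hs
  cases s with
  | nil => exact absurd hs (fun h => aux_nil_heq_cons (hb _ _) (hb _ _) h)
  | cons s₀ ε =>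
    rw [Prefunctor.mapPath_cons] at hs
    obtain ⟨-, hs1, hs2⟩ := aux_cons_heq_inv (hb _ _) (hb _ _) hs
    have e1 : (⟨_, s₀⟩ : Σ z : Γ', Path v' z) = ⟨a₁, p'⟩ :=
      aux_label_inj hb π' hπ' (hs1.trans hp.symm)
    obtain rfl : _ = a₁ := congrArg Sigma.fst e1
    exact ⟨ε, hs2⟩

end Key

/-- Let `Γ`, `Γ'` be connected graphs edge-labeled over a one-vertex graph `B` via
immersions `π`, `π'`, with basepoints `v`, `v'`. There is an isomorphism of graphs
`f : Γ → Γ'` (bijective on vertices and on arrows) with `π' ∘ f = π` and `f v = v'`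
iff there is a label-preserving bijection between paths in `Γ` starting at `v` and
paths in `Γ'` starting at `v'` carrying circuits to circuits and conversely. -/
theorem exists_iso_iff_path_bijection {Γ Γ' B : Type*}
    [Quiver Γ] [Quiver Γ'] [Quiver B]
    [HasInvolutiveReverse Γ] [HasInvolutiveReverse Γ'] [HasInvolutiveReverse B]
    (hΓ : IsConnectedQuiver Γ) (hΓ' : IsConnectedQuiver Γ')
    (hB : ∃ b : B, ∀ x : B, x = b)
    (π : Γ ⥤q B) (hπrev : PreservesReverse π) (hπ : IsImmersion π)
    (π' : Γ' ⥤q B) (hπ'rev : PreservesReverse π') (hπ' : IsImmersion π')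
    (v : Γ) (v' : Γ') :
    (∃ f : Γ ⥤q Γ', PreservesReverse f ∧ Function.Bijective f.obj ∧
        Function.Bijective (arrowMap f) ∧ f.comp π' = π ∧ f.obj v = v') ↔
      (∃ Φ : (Σ w : Γ, Path v w) ≃ (Σ w' : Γ', Path v' w'),
        ∀ x : Σ w : Γ, Path v w,
          HEq (π'.mapPath (Φ x).2) (π.mapPath x.2) ∧ (x.1 = v ↔ (Φ x).1 = v')) := by
  obtain ⟨b, hb0⟩ := hB
  have hb : ∀ x y : B, x = y := fun x y => (hb0 x).trans (hb0 y).symm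
  constructor
  · rintro ⟨f, hfrev, hfobj, hfarr, hcomp, hfv⟩
    subst hcomp
    have hlabp : ∀ {a c : Γ} (p : Path a c),
        HEq (π'.mapPath (f.mapPath p)) ((f ⋙q π').mapPath p) := by
      intro a c p
      rw [← aux_mapPath_fcomp f π' p]
      exact HEq.rfl
    refine ⟨Equiv.ofBijective (fun x => ⟨f.obj x.1, (f.mapPath x.2).cast hfv rfl⟩)
      ⟨?_, ?_⟩, ?_⟩
    · intro x y hxy
      obtain ⟨h1, h2⟩ := aux_sigma_inv hxy
      have c1 : HEq (π'.mapPath ((f.mapPath x.2).cast hfv rfl)) (π'.mapPath (f.mapPath x.2)) :=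
        aux_mapPath_heq_congr π' hfv.symm rfl (Path.cast_heq _ _ _)
      have c2 : HEq (π'.mapPath ((f.mapPath y.2).cast hfv rfl)) (π'.mapPath (f.mapPath y.2)) :=
        aux_mapPath_heq_congr π' hfv.symm rfl (Path.cast_heq _ _ _)
      have c3 : HEq (π'.mapPath ((f.mapPath x.2).cast hfv rfl))
          (π'.mapPath ((f.mapPath y.2).cast hfv rfl)) :=
        aux_mapPath_heq_congr π' rfl h1 h2
      have big : HEq (π'.mapPath (f.mapPath x.2)) (π'.mapPath (f.mapPath y.2)) :=
        (c1.symm.trans c3).trans c2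
      exact aux_label_inj hb (f ⋙q π') hπ (((hlabp x.2).symm.trans big).trans (hlabp y.2))
    · rintro ⟨w', q'⟩
      induction q' with
      | nil =>
        exact ⟨⟨v, Path.nil⟩, aux_sigma_ext hfv ((Path.cast_heq _ _ _).trans (aux_nil_heq hfv))⟩
      | cons q₁ e' ih =>
        obtain ⟨⟨m, p⟩, hx⟩ := ih
        obtain ⟨h1, h2⟩ := aux_sigma_inv hx
        obtain ⟨⟨a, c, e⟩, he⟩ := hfarr.2 ⟨_, _, e'⟩
        obtain ⟨he1, he2, he3⟩ := aux_sigma3_inv he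
        obtain rfl : a = m := hfobj.1 (he1.trans h1.symm)
        refine ⟨⟨c, p.cons e⟩, aux_sigma_ext he2 ((Path.cast_heq _ _ _).trans ?_)⟩
        exact aux_cons_heq hfv h1 he2 ((Path.cast_heq hfv rfl (f.mapPath p)).symm.trans h2) he3
    · intro x
      refine ⟨?_, ?_, ?_⟩
      · have c1 : HEq (π'.mapPath ((f.mapPath x.2).cast hfv rfl)) (π'.mapPath (f.mapPath x.2)) :=
          aux_mapPath_heq_congr π' hfv.symm rfl (Path.cast_heq _ _ _)
        exact c1.trans (hlabp x.2)
      · intro h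
        show f.obj x.1 = v'
        rw [h]; exact hfv
      · intro h
        exact hfobj.1 ((show f.obj x.1 = v' from h).trans hfv.symm)
  · rintro ⟨Φ, hΦ⟩
    have P : ∀ w : Γ, Path v w := fun w => (hΓ v w).some
    have P' : ∀ w' : Γ', Path v' w' := fun w' => (hΓ' v' w').some
    have hΦlab : ∀ x, HEq (π'.mapPath (Φ x).2) (π.mapPath x.2) := fun x => (hΦ x).1
    have hΦcirc : ∀ x, x.1 = v → (Φ x).1 = v' := fun x h => ((hΦ x).2).mp h
    have hΨlab : ∀ y, HEq (π.mapPath (Φ.symm y).2) (π'.mapPath y.2) := by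
      intro y
      have h := (hΦ (Φ.symm y)).1
      rw [Equiv.apply_symm_apply] at h
      exact h.symm
    have hΨcirc : ∀ y, y.1 = v' → (Φ.symm y).1 = v := by
      intro y hy
      have h := (hΦ (Φ.symm y)).2
      rw [Equiv.apply_symm_apply] at h
      exact h.mpr hy
    have hwd : ∀ {w : Γ} (p : Path v w), (Φ ⟨w, p⟩).1 = (Φ ⟨w, P w⟩).1 :=
      fun {w} p => aux_endpoint hb π hπrev π' hπ'rev hπ' v v' (⇑Φ) hΦlab hΦcirc p (P w)
    have hwd' : ∀ {w' : Γ'} (q : Path v' w'), (Φ.symm ⟨w', q⟩).1 = (Φ.symm ⟨w', P' w'⟩).1 :=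
      fun {w'} q => aux_endpoint hb π' hπ'rev π hπrev hπ v' v (⇑Φ.symm) hΨlab hΨcirc q (P' w')
    have hM : ∀ {a c : Γ} (e : a ⟶ c),
        ∃ ε : (Φ ⟨a, P a⟩).1 ⟶ (Φ ⟨c, P c⟩).1, HEq (π'.map ε) (π.map e) := by
      intro a c e
      obtain ⟨ε, hε⟩ := aux_arrowlift hb π π' hπ' v v' (⇑Φ) hΦlab e (P a)
      rw [← hwd ((P a).cons e)]
      exact ⟨ε, hε⟩
    have hM' : ∀ {a c : Γ'} (e : a ⟶ c),
        ∃ ε : (Φ.symm ⟨a, P' a⟩).1 ⟶ (Φ.symm ⟨c, P' c⟩).1, HEq (π.map ε) (π'.map e) := by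
      intro a c e
      obtain ⟨ε, hε⟩ := aux_arrowlift hb π' π hπ v' v (⇑Φ.symm) hΨlab e (P' a)
      rw [← hwd' ((P' a).cons e)]
      exact ⟨ε, hε⟩
    set f : Γ ⥤q Γ' := ⟨fun w => (Φ ⟨w, P w⟩).1, fun {a c} e => (hM e).choose⟩ with hfdef
    set g : Γ' ⥤q Γ := ⟨fun w' => (Φ.symm ⟨w', P' w'⟩).1, fun {a c} e => (hM' e).choose⟩ with hgdef
    have hflab : ∀ {a c : Γ} (e : a ⟶ c), HEq (π'.map (f.map e)) (π.map e) :=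
      fun {a c} e => (hM e).choose_spec
    have hglab : ∀ {a c : Γ'} (e : a ⟶ c), HEq (π.map (g.map e)) (π'.map e) :=
      fun {a c} e => (hM' e).choose_spec
    have hgf : ∀ w : Γ, g.obj (f.obj w) = w := by
      intro w
      have h2 : (Φ.symm (Φ ⟨w, P w⟩)).1 = g.obj (f.obj w) := hwd' ((Φ ⟨w, P w⟩).2)
      rw [Equiv.symm_apply_apply] at h2
      exact h2.symm
    have hfg : ∀ w' : Γ', f.obj (g.obj w') = w' := by
      intro w'
      have h2 : (Φ (Φ.symm ⟨w', P' w'⟩)).1 = f.obj (g.obj w') := hwd ((Φ.symm ⟨w', P' w'⟩).2)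
      rw [Equiv.apply_symm_apply] at h2
      exact h2.symm
    have hobjinj : Function.Injective f.obj := Function.LeftInverse.injective hgf
    have hfv : f.obj v = v' := hΦcirc ⟨v, P v⟩ rfl
    refine ⟨f, ?_, ⟨hobjinj, fun w' => ⟨g.obj w', hfg w'⟩⟩, ⟨?_, ?_⟩, ?_, hfv⟩
    · intro a c e
      have hA : HEq (π'.map (f.map (reverse e))) (reverse (π.map e)) := by
        have h := hflab (reverse e)
        rwa [hπrev e] at h
      have hB2 : HEq (π'.map (reverse (f.map e))) (reverse (π.map e)) := by
        rw [hπ'rev (f.map e)]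
        exact aux_hom_rev_heq (hb _ _) (hb _ _) (hflab e)
      obtain ⟨-, h⟩ := aux_arrow_inj hb π' hπ' (hA.trans hB2.symm)
      exact eq_of_heq h
    · rintro ⟨a, c, e⟩ ⟨a', c', e'⟩ h
      obtain ⟨h1, h2, h3⟩ := aux_sigma3_inv h
      obtain rfl : a = a' := hobjinj h1
      obtain rfl : c = c' := hobjinj h2
      have h3' : f.map e = f.map e' := eq_of_heq h3
      have hl : HEq (π.map e) (π.map e') := by
        have hh := (hflab e).symm
        rw [h3'] at hh
        exact hh.trans (hflab e')
      obtain ⟨-, he⟩ := aux_arrow_inj hb π hπ hl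
      exact aux_sigma3_ext rfl rfl he
    · rintro ⟨a₁, c₁, e₁⟩
      obtain ⟨ε, hε⟩ := hM' e₁
      refine ⟨⟨g.obj a₁, g.obj c₁, ε⟩, aux_sigma3_ext (hfg a₁) (hfg c₁) ?_⟩
      exact (aux_arrow_inj' hb π' hπ' (hfg a₁) ((hflab ε).trans hε)).2
    · exact aux_prefunctor_ext (fun X => hb _ _) (fun X Y e => hflab e)
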